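/- Let I be a proper ideal of R = C^∞(M,ℝ) of finite codimension and let y₁, …, y_n be the (distinct) points of spec(I). Setting I_i = I + 𝔫_{y_i}, the ideals I_i are in general position: for every i, I_i + (I₁ ∩ ⋯ ∩ Î_i ∩ ⋯ ∩ I_n) = R, where the hat denotes omission of the i-th factor. -/

import Mathlib

open scoped Manifold
open Module Filter Topology

noncomputable section

/-- The ℝ-algebra of smooth real-valued functions on a manifold `M` modelled on `ℝ^m`. -/
abbrev SmoothFns (m : ℕ) (M : Type*) [TopologicalSpace M]
    [ChartedSpace (EuclideanSpace ℝ (Fin m)) M] : Type _ :=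
  C^(⊤ : ℕ∞)⟮𝓡 m, M; 𝓘(ℝ, ℝ), ℝ⟯

variable {m : ℕ} {M : Type*} [TopologicalSpace M] [T2Space M] [SecondCountableTopology M]
  [ChartedSpace (EuclideanSpace ℝ (Fin m)) M] [IsManifold (𝓡 m) (⊤ : ℕ∞) M]

/-- The ideal `𝔪ₓ` of smooth functions vanishing at the point `x`. -/
def mIdeal (x : M) : Ideal (SmoothFns m M) where
  carrier := {f | f x = 0}
  add_mem' := by intro f g hf hg; simp_all
  zero_mem' := by simp
  smul_mem' := by intro c f hf; simp_all

/-- The ideal `𝔫ₓ` of smooth functions vanishing on some neighbourhood of the point `x`. -/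
def nIdeal (x : M) : Ideal (SmoothFns m M) where
  carrier := {f | ∀ᶠ y in 𝓝 x, f y = 0}
  add_mem' := by
    intro f g hf hg
    filter_upwards [hf, hg] with y h1 h2
    simp [h1, h2]
  zero_mem' := by filter_upwards with y; simp
  smul_mem' := by
    intro c f hf
    filter_upwards [hf] with y h
    simp [h]

/-- The spectrum of an ideal: the set of common zeros of its elements. -/
def idealSpec (I : Ideal (SmoothFns m M)) : Set M :=
  {x : M | ∀ f ∈ I, f x = 0}

/-- The primary components `I_i = I + 𝔫_{y_i}` of a proper ideal `I` of finite
codimension (where `y_1, …, y_n` are the distinct points of `spec I`) are in general position: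
`I_i + ⋂_{j ≠ i} I_j = R` for every `i`. -/
theorem primary_components_in_general_position
    (I : Ideal (SmoothFns m M)) (hI : I ≠ ⊤)
    (hfd : FiniteDimensional ℝ (SmoothFns m M ⧸ I))
    (n : ℕ) (y : Fin n → M) (hy : Function.Injective y)
    (hrange : idealSpec I = Set.range y) :
    ∀ i : Fin n, (I + nIdeal (y i)) ⊔ (⨅ j ≠ i, (I + nIdeal (y j))) = ⊤ := by
  intro i
  -- The set of other points is closed, so its complement is a neighborhood of `y i`.
  have hU : (y '' {j | j ≠ i})ᶜ ∈ 𝓝 (y i) := by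
    refine IsOpen.mem_nhds ?_ ?_
    · exact ((Set.Finite.image y (Set.toFinite _)).isClosed).isOpen_compl
    · simp only [Set.mem_compl_iff, Set.mem_image, not_exists, not_and]
      intro j hj hyj
      exact hj (hy hyj)
  -- Choose a smooth bump function at `y i` supported away from the other points.
  obtain ⟨f, -, hsupp⟩ :=
    ((SmoothBumpFunction.nhds_basis_tsupport (I := 𝓡 m) (y i)).mem_iff).mp hU
  set g : SmoothFns m M := ⟨f, f.contMDiff⟩ with hg
  -- `1 - g` lies in `𝔫_{y i}`.
  have h1 : (1 : SmoothFns m M) - g ∈ nIdeal (y i) := by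
    have := f.eventuallyEq_one
    filter_upwards [this] with z hz
    show (1 : ℝ) - f z = 0
    simp [hz]
  -- `g` lies in `𝔫_{y j}` for all `j ≠ i`.
  have h2 : ∀ j, j ≠ i → g ∈ nIdeal (y j) := by
    intro j hj
    have hyj : y j ∈ (tsupport (f : M → ℝ))ᶜ := by
      intro hmem
      exact (hsupp hmem) ⟨j, hj, rfl⟩
    have hopen : IsOpen (tsupport (f : M → ℝ))ᶜ := (isClosed_tsupport _).isOpen_compl
    filter_upwards [hopen.mem_nhds hyj] with z hz
    exact image_eq_zero_of_notMem_tsupport hz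
  -- Conclude: `1 = (1 - g) + g` lies in the sup.
  rw [Ideal.eq_top_iff_one]
  have hmem1 : (1 : SmoothFns m M) - g ∈ I + nIdeal (y i) :=
    Submodule.mem_sup_right h1
  have hmem2 : g ∈ ⨅ j ≠ i, (I + nIdeal (y j)) := by
    rw [Ideal.mem_iInf]
    intro j
    rw [Ideal.mem_iInf]
    intro hj
    exact Submodule.mem_sup_right (h2 j hj)
  have : (1 : SmoothFns m M) - g + g ∈
      (I + nIdeal (y i)) ⊔ (⨅ j ≠ i, (I + nIdeal (y j))) :=
    Submodule.add_mem_sup hmem1 hmem2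
  simpa using this
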